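/- Let ρ ∈ (-1,1) and define p(x,y) = 1/2 - arctan(√((1+ρ)/(1-ρ)) · (y-x)/(y+x)) / (2·arctan(√((1+ρ)/(1-ρ)))) for x,y > 0. Then p satisfies the PDE (1/2)∂²p/∂x² + (1/2)∂²p/∂y² + ρ ∂²p/∂x∂y = 0 on the open positive quadrant. -/

import Mathlib

open Real Filter Set

/-- For `ρ ∈ (-1,1)`, the function
`p(x,y) = 1/2 - arctan(√((1+ρ)/(1-ρ))·(y-x)/(y+x)) / (2 arctan(√((1+ρ)/(1-ρ))))`
satisfies `(1/2)∂²p/∂x² + (1/2)∂²p/∂y² + ρ ∂²p/∂x∂y = 0` on the open positive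
quadrant. -/
theorem stmt1 (ρ : ℝ) (hρ : ρ ∈ Ioo (-1 : ℝ) 1) (p : ℝ → ℝ → ℝ)
    (hp : ∀ x y : ℝ, p x y =
      1 / 2 - arctan (Real.sqrt ((1 + ρ) / (1 - ρ)) * ((y - x) / (y + x)))
        / (2 * arctan (Real.sqrt ((1 + ρ) / (1 - ρ))))) :
    ∀ x y : ℝ, 0 < x → 0 < y →
      (1 / 2) * deriv (fun s => deriv (fun r => p r y) s) x
        + (1 / 2) * deriv (fun s => deriv (fun r => p x r) s) y
        + ρ * deriv (fun s => deriv (fun r => p r s) x) y = 0 := by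
  obtain ⟨hρl, hρr⟩ := hρ
  have h1ρ : (0:ℝ) < 1 - ρ := by linarith
  have h2ρ : (0:ℝ) < 1 + ρ := by linarith
  have hm : (0:ℝ) < (1 + ρ) / (1 - ρ) := div_pos h2ρ h1ρ
  set c : ℝ := Real.sqrt ((1 + ρ) / (1 - ρ)) with hcdef
  have hc : 0 < c := Real.sqrt_pos.2 hm
  have hc2 : c ^ 2 = (1 + ρ) / (1 - ρ) := Real.sq_sqrt hm.le
  set K : ℝ := 2 * arctan c with hKdef
  have hK : K ≠ 0 := by
    have h : 0 < arctan c := by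
      have := Real.arctan_strictMono hc
      rwa [Real.arctan_zero] at this
    positivity
  -- nonvanishing denominator
  have hD : ∀ a b : ℝ, 0 < a → 0 < b → ((b + a) ^ 2 + c ^ 2 * (b - a) ^ 2) ≠ 0 := by
    intro a b ha hb
    have hba : 0 < b + a := by linarith
    have h1 : 0 < (b + a) ^ 2 := by positivity
    have h2 : 0 ≤ c ^ 2 * (b - a) ^ 2 := by positivity
    linarith
  -- derivative in the first variable
  have hderiv1 : ∀ a b : ℝ, 0 < a → 0 < b →
      HasDerivAt (fun r => p r b)
        (2 * c * b / (K * ((b + a) ^ 2 + c ^ 2 * (b - a) ^ 2))) a := by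
    intro a b ha hb
    have hba : b + a ≠ 0 := by positivity
    have h1 : HasDerivAt (fun r : ℝ => (b - r) / (b + r)) (-(2 * b) / (b + a) ^ 2) a := by
      have hnum : HasDerivAt (fun r : ℝ => b - r) (-1) a := (hasDerivAt_id a).const_sub b
      have hden : HasDerivAt (fun r : ℝ => b + r) 1 a := (hasDerivAt_id a).const_add b
      have := hnum.div hden hba
      refine this.congr_deriv ?_
      field_simp
      ring
    have h2 : HasDerivAt (fun r : ℝ => c * ((b - r) / (b + r)))
        (c * (-(2 * b) / (b + a) ^ 2)) a := h1.const_mul c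
    have h3 := (Real.hasDerivAt_arctan (c * ((b - a) / (b + a)))).comp a h2
    have h4 := (h3.div_const K).const_sub (1 / 2 : ℝ)
    have heq : (fun r => p r b) =
        fun r => 1 / 2 - arctan (c * ((b - r) / (b + r))) / K := by
      funext r; rw [hp r b]
    rw [heq]
    refine h4.congr_deriv ?_
    have hq : (1 : ℝ) + (c * ((b - a) / (b + a))) ^ 2 ≠ 0 := by positivity
    field_simp
  -- derivative in the second variable
  have hderiv2 : ∀ a b : ℝ, 0 < a → 0 < b →
      HasDerivAt (fun r => p a r)
        (-(2 * c * a) / (K * ((b + a) ^ 2 + c ^ 2 * (b - a) ^ 2))) b := by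
    intro a b ha hb
    have hba : b + a ≠ 0 := by positivity
    have h1 : HasDerivAt (fun r : ℝ => (r - a) / (r + a)) (2 * a / (b + a) ^ 2) b := by
      have hnum : HasDerivAt (fun r : ℝ => r - a) 1 b := (hasDerivAt_id b).sub_const a
      have hden : HasDerivAt (fun r : ℝ => r + a) 1 b := (hasDerivAt_id b).add_const a
      have := hnum.div hden hba
      refine this.congr_deriv ?_
      field_simp
      ring
    have h2 : HasDerivAt (fun r : ℝ => c * ((r - a) / (r + a)))
        (c * (2 * a / (b + a) ^ 2)) b := h1.const_mul c
    have h3 := (Real.hasDerivAt_arctan (c * ((b - a) / (b + a)))).comp b h2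
    have h4 := (h3.div_const K).const_sub (1 / 2 : ℝ)
    have heq : (fun r => p a r) =
        fun r => 1 / 2 - arctan (c * ((r - a) / (r + a))) / K := by
      funext r; rw [hp a r]
    rw [heq]
    refine h4.congr_deriv ?_
    have hq : (1 : ℝ) + (c * ((b - a) / (b + a))) ^ 2 ≠ 0 := by positivity
    field_simp
  intro x y hx hy
  have hKD : ∀ a b : ℝ, 0 < a → 0 < b →
      K * ((b + a) ^ 2 + c ^ 2 * (b - a) ^ 2) ≠ 0 :=
    fun a b ha hb => mul_ne_zero hK (hD a b ha hb)
  -- ∂²p/∂x²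
  have e1 : deriv (fun s => deriv (fun r => p r y) s) x =
      (0 * (K * ((y + x) ^ 2 + c ^ 2 * (y - x) ^ 2)) -
        2 * c * y * (K * ((2:ℕ) * (y + x) ^ 1 * 1 + c ^ 2 * ((2:ℕ) * (y - x) ^ 1 * (-1)))))
        / (K * ((y + x) ^ 2 + c ^ 2 * (y - x) ^ 2)) ^ 2 := by
    have heq : (fun s => deriv (fun r => p r y) s) =ᶠ[nhds x]
        fun s => 2 * c * y / (K * ((y + s) ^ 2 + c ^ 2 * (y - s) ^ 2)) := by
      filter_upwards [eventually_gt_nhds hx] with s hs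
      exact (hderiv1 s y hs hy).deriv
    rw [heq.deriv_eq]
    have hd1 : HasDerivAt (fun s : ℝ => (y + s) ^ 2) ((2:ℕ) * (y + x) ^ 1 * 1) x :=
      ((hasDerivAt_id x).const_add y).pow 2
    have hd2 : HasDerivAt (fun s : ℝ => (y - s) ^ 2) ((2:ℕ) * (y - x) ^ 1 * (-1)) x :=
      ((hasDerivAt_id x).const_sub y).pow 2
    have hden : HasDerivAt (fun s : ℝ => K * ((y + s) ^ 2 + c ^ 2 * (y - s) ^ 2))
        (K * ((2:ℕ) * (y + x) ^ 1 * 1 + c ^ 2 * ((2:ℕ) * (y - x) ^ 1 * (-1)))) x :=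
      (hd1.add (hd2.const_mul (c ^ 2))).const_mul K
    exact ((hasDerivAt_const x (2 * c * y)).div hden (hKD x y hx hy)).deriv
  -- ∂²p/∂y²
  have e2 : deriv (fun s => deriv (fun r => p x r) s) y =
      (0 * (K * ((y + x) ^ 2 + c ^ 2 * (y - x) ^ 2)) -
        (-(2 * c * x)) * (K * ((2:ℕ) * (y + x) ^ 1 * 1 + c ^ 2 * ((2:ℕ) * (y - x) ^ 1 * 1))))
        / (K * ((y + x) ^ 2 + c ^ 2 * (y - x) ^ 2)) ^ 2 := by
    have heq : (fun s => deriv (fun r => p x r) s) =ᶠ[nhds y]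
        fun s => -(2 * c * x) / (K * ((s + x) ^ 2 + c ^ 2 * (s - x) ^ 2)) := by
      filter_upwards [eventually_gt_nhds hy] with s hs
      exact (hderiv2 x s hx hs).deriv
    rw [heq.deriv_eq]
    have hd1 : HasDerivAt (fun s : ℝ => (s + x) ^ 2) ((2:ℕ) * (y + x) ^ 1 * 1) y :=
      ((hasDerivAt_id y).add_const x).pow 2
    have hd2 : HasDerivAt (fun s : ℝ => (s - x) ^ 2) ((2:ℕ) * (y - x) ^ 1 * 1) y :=
      ((hasDerivAt_id y).sub_const x).pow 2
    have hden : HasDerivAt (fun s : ℝ => K * ((s + x) ^ 2 + c ^ 2 * (s - x) ^ 2))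
        (K * ((2:ℕ) * (y + x) ^ 1 * 1 + c ^ 2 * ((2:ℕ) * (y - x) ^ 1 * 1))) y :=
      (hd1.add (hd2.const_mul (c ^ 2))).const_mul K
    exact ((hasDerivAt_const y (-(2 * c * x))).div hden (hKD x y hx hy)).deriv
  -- mixed ∂²p/∂x∂y
  have e3 : deriv (fun s => deriv (fun r => p r s) x) y =
      (2 * c * (K * ((y + x) ^ 2 + c ^ 2 * (y - x) ^ 2)) -
        2 * c * y * (K * ((2:ℕ) * (y + x) ^ 1 * 1 + c ^ 2 * ((2:ℕ) * (y - x) ^ 1 * 1))))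
        / (K * ((y + x) ^ 2 + c ^ 2 * (y - x) ^ 2)) ^ 2 := by
    have heq : (fun s => deriv (fun r => p r s) x) =ᶠ[nhds y]
        fun s => 2 * c * s / (K * ((s + x) ^ 2 + c ^ 2 * (s - x) ^ 2)) := by
      filter_upwards [eventually_gt_nhds hy] with s hs
      exact (hderiv1 x s hx hs).deriv
    rw [heq.deriv_eq]
    have hnum : HasDerivAt (fun s : ℝ => 2 * c * s) (2 * c) y := by
      simpa using (hasDerivAt_id y).const_mul (2 * c)
    have hd1 : HasDerivAt (fun s : ℝ => (s + x) ^ 2) ((2:ℕ) * (y + x) ^ 1 * 1) y :=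
      ((hasDerivAt_id y).add_const x).pow 2
    have hd2 : HasDerivAt (fun s : ℝ => (s - x) ^ 2) ((2:ℕ) * (y - x) ^ 1 * 1) y :=
      ((hasDerivAt_id y).sub_const x).pow 2
    have hden : HasDerivAt (fun s : ℝ => K * ((s + x) ^ 2 + c ^ 2 * (s - x) ^ 2))
        (K * ((2:ℕ) * (y + x) ^ 1 * 1 + c ^ 2 * ((2:ℕ) * (y - x) ^ 1 * 1))) y :=
      (hd1.add (hd2.const_mul (c ^ 2))).const_mul K
    exact (hnum.div hden (hKD x y hx hy)).deriv
  rw [e1, e2, e3]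
  have hkey : ρ * (1 + c ^ 2) = c ^ 2 - 1 := by
    rw [hc2]; field_simp; ring
  have hDxy := hD x y hx hy
  rw [← mul_div_assoc, ← mul_div_assoc, ← mul_div_assoc, ← add_div, ← add_div,
    div_eq_zero_iff]
  left
  push_cast
  linear_combination (-(2 * c * K * (y ^ 2 - x ^ 2))) * hkey
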